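/- Let X ∼ Binomial(n, p) with n ≥ 3, p ≥ 2·log(n)/n, and q ≤ p/log(n). Then P(X/n ≤ q) ≤ (e·log(n)/n)². -/

import Mathlib

private lemma phi_mono {a b : ℝ} (ha : 0 < a) (hab : a ≤ b) (hb1 : b ≤ 1) :
    a * (1 - Real.log a) ≤ b * (1 - Real.log b) := by
  have hb : 0 < b := lt_of_lt_of_le ha hab
  have hlog : Real.log (b / a) ≤ b / a - 1 := Real.log_le_sub_one_of_pos (by positivity)
  have hdiv : Real.log (b / a) = Real.log b - Real.log a := Real.log_div hb.ne' ha.ne'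
  have h1 : a * (Real.log b - Real.log a) ≤ b - a := by
    rw [← hdiv]
    have := mul_le_mul_of_nonneg_left hlog ha.le
    have hba : a * (b / a - 1) = b - a := by field_simp
    linarith [hba ▸ this]
  have hlogb : Real.log b ≤ 0 := Real.log_nonpos hb.le hb1
  nlinarith [mul_nonneg (sub_nonneg.2 hab) (neg_nonneg.2 hlogb)]

/-- Chernoff-type bound: for `X ∼ Binomial(n,p)` with `n ≥ 3`,
`p ≥ 2·log n / n` and `0 < q ≤ p / log n` (with `q < p`),
`P(X/n ≤ q) ≤ (e·log n / n)²`. -/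
theorem binomial_lower_tail_bound (n : ℕ) (hn : 3 ≤ n) (p q : ℝ)
    (hp : p ∈ Set.Ioo (0 : ℝ) 1)
    (hplb : 2 * Real.log n / n ≤ p)
    (hq0 : 0 < q) (hqp : q < p)
    (hqub : q ≤ p / Real.log n) :
    (∑ k ∈ Finset.range (n + 1),
        if (k : ℝ) / n ≤ q then (n.choose k : ℝ) * p ^ k * (1 - p) ^ (n - k) else 0)
      ≤ (Real.exp 1 * Real.log n / n) ^ 2 := by
  obtain ⟨hp0, hp1⟩ := hp
  have hNpos : (0:ℝ) < (n:ℝ) := by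
    have : (0:ℕ) < n := by omega
    exact_mod_cast this
  set L := Real.log n with hLdef
  have hL1 : 1 < L := by
    have h3 : (3:ℝ) ≤ (n:ℝ) := by exact_mod_cast hn
    have he3 : Real.exp 1 < 3 := by
      have := Real.exp_one_lt_d9; linarith
    calc (1:ℝ) = Real.log (Real.exp 1) := (Real.log_exp 1).symm
      _ < Real.log 3 := Real.log_lt_log (Real.exp_pos 1) he3
      _ ≤ L := Real.log_le_log (by norm_num) h3
  have hL0 : 0 < L := by linarith
  set t := Real.log (p / q) with htdef
  have hpq1 : 1 < p / q := (one_lt_div hq0).2 hqp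
  have ht0 : 0 < t := Real.log_pos hpq1
  have hexp_t : Real.exp t = p / q := Real.exp_log (by positivity)
  have h1p : 0 ≤ 1 - p := by linarith
  -- Step A: MGF bound
  have hsum : (∑ k ∈ Finset.range (n + 1),
        if (k : ℝ) / n ≤ q then (n.choose k : ℝ) * p ^ k * (1 - p) ^ (n - k) else 0)
      ≤ Real.exp (t * (q * n)) * (q + (1 - p)) ^ n := by
    have hbin : (q + (1 - p)) ^ n
        = ∑ k ∈ Finset.range (n + 1), q ^ k * (1 - p) ^ (n - k) * (n.choose k : ℝ) :=
      add_pow q (1 - p) n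
    rw [hbin, Finset.mul_sum]
    apply Finset.sum_le_sum
    intro k hk
    by_cases hc : (k : ℝ) / n ≤ q
    · rw [if_pos hc]
      have hk_le : (k : ℝ) ≤ q * n := by
        rw [div_le_iff₀ hNpos] at hc; linarith
      have hpk : p ^ k = Real.exp (t * k) * q ^ k := by
        have h1 : Real.exp (t * k) = (p / q) ^ k := by
          rw [mul_comm, Real.exp_nat_mul, hexp_t]
        rw [h1, ← mul_pow, div_mul_cancel₀ _ hq0.ne']
      have key : (n.choose k : ℝ) * p ^ k * (1 - p) ^ (n - k)
          = Real.exp (t * k) * (q ^ k * (1 - p) ^ (n - k) * (n.choose k : ℝ)) := by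
        rw [hpk]; ring
      rw [key]
      apply mul_le_mul_of_nonneg_right _ (by positivity)
      exact Real.exp_le_exp.2 (by nlinarith)
    · rw [if_neg hc]; positivity
  -- Step B
  have hB : (q + (1 - p)) ^ n ≤ Real.exp ((q - p) * n) := by
    have hb : q + (1 - p) ≤ Real.exp (q - p) := by
      have := Real.add_one_le_exp (q - p); linarith
    calc (q + (1 - p)) ^ n ≤ (Real.exp (q - p)) ^ n :=
          pow_le_pow_left₀ (by linarith) hb n
      _ = Real.exp ((q - p) * n) := by rw [← Real.exp_nat_mul, mul_comm]
  -- Step C: exponent bound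
  have hC : t * (q * n) + (q - p) * n ≤ 2 + 2 * Real.log L - 2 * L := by
    have ha : q * t + q ≤ p / L * (1 + Real.log L) := by
      have hqp' : 0 < q / p := by positivity
      have h1 : q / p ≤ 1 / L := by
        rw [div_le_div_iff₀ hp0 hL0]
        have : q * L ≤ p := by
          have := mul_le_mul_of_nonneg_right hqub hL0.le
          rw [div_mul_cancel₀ _ hL0.ne'] at this
          linarith
        linarith
      have h2 : (1:ℝ) / L ≤ 1 := by rw [div_le_one hL0]; linarith
      have hmono := phi_mono hqp' h1 h2
      have hlogqp : Real.log (q / p) = -t := by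
        rw [htdef, ← Real.log_inv]
        congr 1
        field_simp
      have hlog1L : Real.log (1 / L) = -Real.log L := by rw [one_div, Real.log_inv]
      rw [hlogqp, hlog1L] at hmono
      -- hmono : q/p * (1 - -t) ≤ 1/L * (1 - -log L)
      have hmul := mul_le_mul_of_nonneg_left hmono hp0.le
      have e1 : p * (q / p * (1 - -t)) = q * t + q := by field_simp; ring
      have e2 : p * (1 / L * (1 - -Real.log L)) = p / L * (1 + Real.log L) := by
        field_simp; ring
      linarith [hmul, e1, e2]
    have hlogL : Real.log L ≤ L - 1 := Real.log_le_sub_one_of_pos hL0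
    have hnp : 2 * L ≤ (n:ℝ) * p := by
      rw [div_le_iff₀ hNpos] at hplb; linarith
    have hfac : (1 + Real.log L - L) / L ≤ 0 :=
      div_nonpos_of_nonpos_of_nonneg (by linarith) hL0.le
    have key : t * (q * n) + (q - p) * n ≤ ((n:ℝ) * p) * ((1 + Real.log L - L) / L) := by
      have h' : q * t + q - p ≤ p * ((1 + Real.log L - L) / L) := by
        have : p * ((1 + Real.log L - L) / L) = p / L * (1 + Real.log L) - p := by
          field_simp
        linarith [this]
      calc t * (q * n) + (q - p) * n = (n:ℝ) * (q * t + q - p) := by ring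
        _ ≤ (n:ℝ) * (p * ((1 + Real.log L - L) / L)) :=
            mul_le_mul_of_nonneg_left h' hNpos.le
        _ = ((n:ℝ) * p) * ((1 + Real.log L - L) / L) := by ring
    have key2 : ((n:ℝ) * p) * ((1 + Real.log L - L) / L)
        ≤ (2 * L) * ((1 + Real.log L - L) / L) :=
      mul_le_mul_of_nonpos_right hnp hfac
    have e3 : (2 * L) * ((1 + Real.log L - L) / L) = 2 + 2 * Real.log L - 2 * L := by
      field_simp
    linarith
  -- Step D
  have hD : Real.exp (2 + 2 * Real.log L - 2 * L) = (Real.exp 1 * L / n) ^ 2 := by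
    have hexpL : Real.exp L = n := Real.exp_log hNpos
    have hexplogL : Real.exp (Real.log L) = L := Real.exp_log hL0
    have h1 : Real.exp (1 + Real.log L - L) = Real.exp 1 * L / n := by
      rw [sub_eq_add_neg, Real.exp_add, Real.exp_add, Real.exp_neg, hexplogL, hexpL]
      ring
    calc Real.exp (2 + 2 * Real.log L - 2 * L)
        = Real.exp ((1 + Real.log L - L) + (1 + Real.log L - L)) := by ring_nf
      _ = Real.exp (1 + Real.log L - L) * Real.exp (1 + Real.log L - L) := Real.exp_add _ _
      _ = (Real.exp 1 * L / n) ^ 2 := by rw [h1]; ring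
  calc (∑ k ∈ Finset.range (n + 1),
        if (k : ℝ) / n ≤ q then (n.choose k : ℝ) * p ^ k * (1 - p) ^ (n - k) else 0)
      ≤ Real.exp (t * (q * n)) * (q + (1 - p)) ^ n := hsum
    _ ≤ Real.exp (t * (q * n)) * Real.exp ((q - p) * n) :=
        mul_le_mul_of_nonneg_left hB (Real.exp_pos _).le
    _ = Real.exp (t * (q * n) + (q - p) * n) := (Real.exp_add _ _).symm
    _ ≤ Real.exp (2 + 2 * Real.log L - 2 * L) := Real.exp_le_exp.2 hC
    _ = (Real.exp 1 * L / n) ^ 2 := hD
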